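/- For every integer n ≥ 2, as α → 0⁺ one has c_n(α) ∼ (n−1)α²/2, i.e. lim_{α→0⁺} c_n(α)/α² = (n−1)/2. -/

import Mathlib

open Real Filter


private lemma pow_sub_pow_le_aux (k : ℕ) {a b : ℝ} (hb : 0 ≤ b) (hba : b ≤ a) :
    a ^ (k + 1) - b ^ (k + 1) ≤ ((k : ℝ) + 1) * a ^ k * (a - b) := by
  induction k with
  | zero => simp
  | succ k ih =>
    have ha : 0 ≤ a := hb.trans hba
    have h1 : b ^ (k + 1) ≤ a ^ (k + 1) := pow_le_pow_left₀ hb hba _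
    have h2 : a * (a ^ (k + 1) - b ^ (k + 1)) ≤ a * (((k : ℝ) + 1) * a ^ k * (a - b)) :=
      mul_le_mul_of_nonneg_left ih ha
    have h3 : b ^ (k + 1) * (a - b) ≤ a ^ (k + 1) * (a - b) :=
      mul_le_mul_of_nonneg_right h1 (sub_nonneg.2 hba)
    calc a ^ (k + 2) - b ^ (k + 2)
        = a * (a ^ (k + 1) - b ^ (k + 1)) + b ^ (k + 1) * (a - b) := by ring
      _ ≤ a * (((k : ℝ) + 1) * a ^ k * (a - b)) + a ^ (k + 1) * (a - b) := add_le_add h2 h3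
      _ = ((k : ℝ) + 1 + 1) * a ^ (k + 1) * (a - b) := by ring
      _ = ((↑(k + 1) : ℝ) + 1) * a ^ (k + 1) * (a - b) := by push_cast; ring

private lemma sin_le_self {s : ℝ} (h0 : 0 ≤ s) : Real.sin s ≤ s := by
  rcases h0.eq_or_lt with h | h
  · simp [← h]
  · exact (Real.sin_lt h).le

private lemma sin_nonneg_aux {s : ℝ} (h0 : 0 ≤ s) (h1 : s ≤ 1) : 0 ≤ Real.sin s :=
  Real.sin_nonneg_of_nonneg_of_le_pi h0 (h1.trans (by linarith [Real.pi_gt_three]))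

private lemma sin_pow_le {m : ℕ} {s : ℝ} (h0 : 0 ≤ s) (h1 : s ≤ 1) :
    Real.sin s ^ (m + 1) ≤ s ^ (m + 1) :=
  pow_le_pow_left₀ (sin_nonneg_aux h0 h1) (sin_le_self h0) _

private lemma sin_pow_ge {m : ℕ} {s : ℝ} (h0 : 0 ≤ s) (h1 : s ≤ 1) :
    s ^ (m + 1) - ((m : ℝ) + 1) * s ^ (m + 3) ≤ Real.sin s ^ (m + 1) := by
  have hcube : s - Real.sin s ≤ s ^ 3 := by
    rcases h0.eq_or_lt with h | h
    · simp [← h]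
    · nlinarith [Real.sin_gt_sub_cube h, pow_nonneg h0 3]
  have key := pow_sub_pow_le_aux m (sin_nonneg_aux h0 h1) (sin_le_self h0)
  have h2 : ((m : ℝ) + 1) * s ^ m * (s - Real.sin s) ≤ ((m : ℝ) + 1) * s ^ (m + 3) := by
    have h3 : s ^ m * (s - Real.sin s) ≤ s ^ m * s ^ 3 :=
      mul_le_mul_of_nonneg_left hcube (pow_nonneg h0 m)
    calc ((m : ℝ) + 1) * s ^ m * (s - Real.sin s)
        = ((m : ℝ) + 1) * (s ^ m * (s - Real.sin s)) := by ring
      _ ≤ ((m : ℝ) + 1) * (s ^ m * s ^ 3) := by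
          exact mul_le_mul_of_nonneg_left h3 (by positivity)
      _ = ((m : ℝ) + 1) * s ^ (m + 3) := by ring
  linarith



private lemma integral_bounds' (m : ℕ) {α : ℝ} (h0 : 0 < α) (h1 : α ≤ 1) :
    α ^ (m + 2) - ((m : ℝ) + 2) * ((m : ℝ) + 1) * α ^ (m + 4)
      ≤ ((m : ℝ) + 2) * (∫ s in (0:ℝ)..α, Real.sin s ^ (m + 1))
    ∧ ((m : ℝ) + 2) * (∫ s in (0:ℝ)..α, Real.sin s ^ (m + 1)) ≤ α ^ (m + 2) := by
  have hc1 : Continuous fun s : ℝ => Real.sin s ^ (m + 1) := Real.continuous_sin.pow _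
  have hint1 := hc1.intervalIntegrable (μ := MeasureTheory.volume) 0 α
  have hint2 := (continuous_pow (m + 1)).intervalIntegrable (μ := MeasureTheory.volume) 0 α
  have hint3 : IntervalIntegrable
      (fun s : ℝ => s ^ (m + 1) - ((m : ℝ) + 1) * s ^ (m + 3)) MeasureTheory.volume 0 α :=
    ((continuous_pow (m + 1)).sub (continuous_const.mul (continuous_pow (m + 3)))).intervalIntegrable (μ := MeasureTheory.volume) 0 α
  have hpow1 : (∫ s in (0:ℝ)..α, s ^ (m + 1)) = α ^ (m + 2) / ((m : ℝ) + 2) := by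
    rw [integral_pow]
    push_cast
    rw [zero_pow (by omega)]
    ring
  have hpow2 : (∫ s in (0:ℝ)..α, s ^ (m + 3)) = α ^ (m + 4) / ((m : ℝ) + 4) := by
    rw [integral_pow]
    push_cast
    rw [zero_pow (by omega)]
    ring
  have hub : (∫ s in (0:ℝ)..α, Real.sin s ^ (m + 1)) ≤ α ^ (m + 2) / ((m : ℝ) + 2) := by
    have := intervalIntegral.integral_mono_on h0.le hint1 hint2
      (fun s hs => sin_pow_le hs.1 (hs.2.trans h1))
    rwa [hpow1] at this
  have hlb : α ^ (m + 2) / ((m : ℝ) + 2) - ((m : ℝ) + 1) * (α ^ (m + 4) / ((m : ℝ) + 4))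
      ≤ ∫ s in (0:ℝ)..α, Real.sin s ^ (m + 1) := by
    have := intervalIntegral.integral_mono_on h0.le hint3 hint1
      (fun s hs => sin_pow_ge hs.1 (hs.2.trans h1))
    rwa [intervalIntegral.integral_sub ((continuous_pow (m+1)).intervalIntegrable (μ := MeasureTheory.volume) 0 α)
      (Continuous.intervalIntegrable (by fun_prop) 0 α : IntervalIntegrable (fun s : ℝ => ((m:ℝ)+1) * s ^ (m + 3)) MeasureTheory.volume 0 α),
      intervalIntegral.integral_const_mul, hpow1, hpow2] at this
  have hα4 : 0 ≤ α ^ (m + 4) := by positivity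
  have hd : α ^ (m + 4) / ((m : ℝ) + 4) ≤ α ^ (m + 4) :=
    div_le_self hα4 (by linarith [Nat.cast_nonneg (α := ℝ) m])
  constructor
  · have h5 : α ^ (m + 2) / ((m : ℝ) + 2) * ((m : ℝ) + 2) = α ^ (m + 2) := by
      field_simp
    nlinarith [mul_le_mul_of_nonneg_left hlb (show (0:ℝ) ≤ (m:ℝ)+2 by positivity),
      mul_le_mul_of_nonneg_left hd (show (0:ℝ) ≤ ((m:ℝ)+2)*((m:ℝ)+1) by positivity), h5]
  · have h5 : α ^ (m + 2) / ((m : ℝ) + 2) * ((m : ℝ) + 2) = α ^ (m + 2) := by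
      field_simp
    nlinarith [mul_le_mul_of_nonneg_left hub (show (0:ℝ) ≤ (m:ℝ)+2 by positivity), h5]


private lemma tendsto_aux_sin' :
    Tendsto (fun α : ℝ => (Real.sin α - α) / α ^ 3) (nhdsWithin 0 (Set.Ioi 0))
      (nhds (-(1 / 6))) := by
  rw [← tendsto_sub_nhds_zero_iff, tendsto_zero_iff_abs_tendsto_zero]
  have hg : Tendsto (fun α : ℝ => 5 / 96 * α) (nhdsWithin 0 (Set.Ioi 0)) (nhds 0) := by
    have hid : Tendsto (fun α : ℝ => α) (nhdsWithin 0 (Set.Ioi 0)) (nhds 0) :=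
      (tendsto_id (α := ℝ) (x := nhds 0)).mono_left nhdsWithin_le_nhds
    simpa using hid.const_mul ((5:ℝ) / 96)
  refine squeeze_zero' (Eventually.of_forall fun α => abs_nonneg _) ?_ hg
  filter_upwards [Ioo_mem_nhdsGT (by norm_num : (0:ℝ) < 1)] with α hα
  obtain ⟨h0, h1⟩ := hα
  have hb := Real.sin_bound (x := α) (by rw [abs_of_pos h0]; linarith)
  rw [abs_of_pos h0] at hb
  have hα3 : (0:ℝ) < α ^ 3 := by positivity
  simp only [Function.comp_apply]
  have heq : (Real.sin α - α) / α ^ 3 - -(1 / 6) = (Real.sin α - (α - α ^ 3 / 6)) / α ^ 3 := by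
    field_simp
    ring
  rw [heq, abs_div, abs_of_pos hα3, div_le_iff₀ hα3]
  calc |Real.sin α - (α - α ^ 3 / 6)| ≤ α ^ 4 * (5 / 96) := by nlinarith [hb, mul_pos (pow_pos h0 4) (sub_pos.2 h1)]
    _ = 5 / 96 * α * α ^ 3 := by ring

private lemma tendsto_aux_sincos' :
    Tendsto (fun α : ℝ => (Real.sin α - α * Real.cos α) / α ^ 3) (nhdsWithin 0 (Set.Ioi 0))
      (nhds (1 / 3)) := by
  rw [← tendsto_sub_nhds_zero_iff, tendsto_zero_iff_abs_tendsto_zero]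
  have hg : Tendsto (fun α : ℝ => 10 / 96 * α) (nhdsWithin 0 (Set.Ioi 0)) (nhds 0) := by
    have hid : Tendsto (fun α : ℝ => α) (nhdsWithin 0 (Set.Ioi 0)) (nhds 0) :=
      (tendsto_id (α := ℝ) (x := nhds 0)).mono_left nhdsWithin_le_nhds
    simpa using hid.const_mul ((10:ℝ) / 96)
  refine squeeze_zero' (Eventually.of_forall fun α => abs_nonneg _) ?_ hg
  filter_upwards [Ioo_mem_nhdsGT (by norm_num : (0:ℝ) < 1)] with α hα
  obtain ⟨h0, h1⟩ := hα
  have hbs := Real.sin_bound (x := α) (by rw [abs_of_pos h0]; linarith)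
  have hbc := Real.cos_bound (x := α) (by rw [abs_of_pos h0]; linarith)
  rw [abs_of_pos h0] at hbs hbc
  have hα3 : (0:ℝ) < α ^ 3 := by positivity
  simp only [Function.comp_apply]
  have heq : (Real.sin α - α * Real.cos α) / α ^ 3 - 1 / 3
      = ((Real.sin α - (α - α ^ 3 / 6)) - α * (Real.cos α - (1 - α ^ 2 / 2))) / α ^ 3 := by
    field_simp
    ring
  rw [heq, abs_div, abs_of_pos hα3, div_le_iff₀ hα3]
  have h4 : |(Real.sin α - (α - α ^ 3 / 6)) - α * (Real.cos α - (1 - α ^ 2 / 2))|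
      ≤ |Real.sin α - (α - α ^ 3 / 6)| + α * |Real.cos α - (1 - α ^ 2 / 2)| := by
    calc _ ≤ |Real.sin α - (α - α ^ 3 / 6)| + |α * (Real.cos α - (1 - α ^ 2 / 2))| :=
          abs_sub _ _
      _ = _ := by rw [abs_mul, abs_of_pos h0]
  have h5 : α * |Real.cos α - (1 - α ^ 2 / 2)| ≤ α * (α ^ 4 * (5 / 96)) :=
    mul_le_mul_of_nonneg_left hbc h0.le
  have h6 : α * (α ^ 4 * (5 / 96)) ≤ α ^ 4 * (5 / 96) := by nlinarith [pow_nonneg h0.le 4]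
  calc |(Real.sin α - (α - α ^ 3 / 6)) - α * (Real.cos α - (1 - α ^ 2 / 2))|
      ≤ α ^ 4 * (5 / 96) + α ^ 4 * (5 / 96) := by nlinarith [mul_pos (pow_pos h0 4) (sub_pos.2 h1)]
    _ ≤ 10 / 96 * α * α ^ 3 := by nlinarith [pow_nonneg h0.le 3]


noncomputable def Sn (n : ℕ) (d : ℝ) : ℝ :=
  ((n : ℝ) * ∫ s in (0:ℝ)..d, Real.sin s ^ (n - 1)) ^ ((1 : ℝ) / n)

noncomputable def cn (n : ℕ) (d : ℝ) : ℝ :=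
  (n : ℝ) - Real.sin d ^ (n - 1) / Sn n d ^ (n - 1) - ((n : ℝ) - 1) * Sn n d / Real.tan d







noncomputable def Af (m : ℕ) (α : ℝ) : ℝ :=
  ((m : ℝ) + 2) * (∫ s in (0:ℝ)..α, Real.sin s ^ (m + 1)) / α ^ (m + 2)

noncomputable def Yf (m : ℕ) (α : ℝ) : ℝ := Af m α ^ ((1 : ℝ) / ((m : ℝ) + 2))

noncomputable def qf (m : ℕ) (u : ℝ) : ℝ :=
  if u = 1 then 0
  else (((m : ℝ) + 2) - (u ^ (m + 1))⁻¹ - ((m : ℝ) + 1) * u) / (u - 1)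

private lemma qf_tendsto (m : ℕ) : Tendsto (qf m) (nhds 1) (nhds 0) := by
  set g : ℝ → ℝ := fun u => ((m : ℝ) + 2) - (u ^ (m + 1))⁻¹ - ((m : ℝ) + 1) * u with hgdef
  have hg1 : g 1 = 0 := by simp [hgdef]; ring
  have hgd : HasDerivAt g 0 1 := by
    have h1 : HasDerivAt (fun u : ℝ => (u ^ (m + 1))⁻¹)
        (-((↑(m + 1) : ℝ) * (1:ℝ) ^ (m + 1 - 1)) / ((1:ℝ) ^ (m + 1)) ^ 2) 1 :=
      (hasDerivAt_pow (m + 1) 1).inv (by simp)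
    have h2 : HasDerivAt (fun u : ℝ => ((m : ℝ) + 1) * u) ((m : ℝ) + 1) 1 := by
      simpa using (hasDerivAt_id (1:ℝ)).const_mul ((m : ℝ) + 1)
    have h3 := ((hasDerivAt_const (1:ℝ) ((m : ℝ) + 2)).sub h1).sub h2
    exact h3.congr_deriv (by push_cast; norm_num)
  rw [← nhdsNE_sup_pure, tendsto_sup]
  constructor
  · have hs := hasDerivAt_iff_tendsto_slope.mp hgd
    refine Tendsto.congr' ?_ hs
    filter_upwards [self_mem_nhdsWithin] with u hu
    have hu1 : u ≠ 1 := hu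
    simp [slope_def_field, qf, hgdef, hu1, hg1, div_eq_div_iff]
    ring_nf
  · have hq1 : qf m 1 = 0 := by simp [qf]
    intro s hs
    simp [hq1, mem_of_mem_nhds hs]

theorem stmt_4 (n : ℕ) (hn : 2 ≤ n) :
    Tendsto (fun α : ℝ => cn n α / α ^ 2) (nhdsWithin 0 (Set.Ioi 0))
      (nhds (((n : ℝ) - 1) / 2)) := by
  obtain ⟨m, rfl⟩ : ∃ m, n = m + 2 := ⟨n - 2, by omega⟩
  set l := nhdsWithin (0:ℝ) (Set.Ioi 0) with hldef
  have hmem : ∀ᶠ α in l, α ∈ Set.Ioo (0:ℝ) 1 := Ioo_mem_nhdsGT (by norm_num)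
  set K : ℝ := ((m : ℝ) + 2) * ((m : ℝ) + 1) with hKdef
  -- bounds on A
  have hAub : ∀ᶠ α in l, Af m α ≤ 1 := by
    filter_upwards [hmem] with α hα
    have h := (integral_bounds' m hα.1 hα.2.le).2
    rw [Af, div_le_one (pow_pos hα.1 _)]
    exact h
  have hAlb : ∀ᶠ α in l, 1 - K * α ^ 2 ≤ Af m α := by
    filter_upwards [hmem] with α hα
    have h := (integral_bounds' m hα.1 hα.2.le).1
    rw [Af, le_div_iff₀ (pow_pos hα.1 _)]
    have hr : α ^ (m + 4) = α ^ (m + 2) * α ^ 2 := by ring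
    simp only [hKdef]
    calc (1 - ((m:ℝ) + 2) * ((m:ℝ) + 1) * α ^ 2) * α ^ (m + 2)
        = α ^ (m + 2) - ((m:ℝ) + 2) * ((m:ℝ) + 1) * α ^ (m + 4) := by ring
      _ ≤ _ := h
  have htendA : Tendsto (Af m) l (nhds 1) := by
    refine tendsto_of_tendsto_of_tendsto_of_le_of_le'
      (g := fun α : ℝ => 1 - K * α ^ 2) (h := fun _ : ℝ => 1) ?_ ?_ hAlb hAub
    · have hid : Tendsto (fun α : ℝ => α ^ 2) l (nhds 0) := by
        have := (continuous_pow 2).tendsto (0:ℝ)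
        simp only [ne_eq, OfNat.ofNat_ne_zero, not_false_eq_true, zero_pow] at this
        exact this.mono_left nhdsWithin_le_nhds
      have h4 : Tendsto (fun α : ℝ => 1 - K * α ^ 2) l (nhds (1 - K * 0)) :=
        tendsto_const_nhds.sub (hid.const_mul K)
      simpa using h4
    · exact tendsto_const_nhds
  have hAhalf : ∀ᶠ α in l, (1:ℝ)/2 ≤ Af m α :=
    Filter.Tendsto.eventually_const_le (by norm_num) htendA
  have htendY : Tendsto (Yf m) l (nhds 1) := by
    have h' := htendA.rpow_const (p := (1:ℝ)/((m:ℝ)+2)) (Or.inr (by positivity))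
    rw [Real.one_rpow] at h'
    exact h'
  have hYbd : ∀ᶠ α in l, |Yf m α - 1| ≤ K * α ^ 2 := by
    filter_upwards [hmem, hAub, hAlb, hAhalf] with α h1 h2 h3 h4
    have hApos : 0 < Af m α := by linarith
    have hY1 : Yf m α ≤ 1 := Real.rpow_le_one hApos.le h2 (by positivity)
    have hY2 : Af m α ≤ Yf m α := by
      calc Af m α = Af m α ^ (1:ℝ) := (Real.rpow_one _).symm
        _ ≤ Af m α ^ ((1:ℝ)/((m:ℝ)+2)) := by
            apply Real.rpow_le_rpow_of_exponent_ge hApos h2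
            rw [div_le_one (by positivity)]
            linarith [Nat.cast_nonneg (α := ℝ) m]
        _ = Yf m α := rfl
    rw [abs_sub_comm, abs_of_nonneg (by linarith : (0:ℝ) ≤ 1 - Yf m α)]
    linarith
  have hYpos : ∀ᶠ α in l, 0 < Yf m α := by
    filter_upwards [hAhalf] with α h
    exact Real.rpow_pos_of_pos (by linarith) _
  -- Sn = α * Y
  have hSn : ∀ᶠ α in l, Sn (m + 2) α = α * Yf m α := by
    filter_upwards [hmem, hAhalf] with α h1 h2
    have hα : 0 < α := h1.1
    have hApos : 0 < Af m α := by linarith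
    have hcast : ((m + 2 : ℕ) : ℝ) = (m : ℝ) + 2 := by push_cast; ring
    have hNI : ((m + 2 : ℕ) : ℝ) * (∫ s in (0:ℝ)..α, Real.sin s ^ (m + 1))
        = α ^ (m + 2) * Af m α := by
      rw [Af, hcast]
      field_simp
    rw [Sn, show m + 2 - 1 = m + 1 from rfl, hNI,
      Real.mul_rpow (by positivity) hApos.le]
    congr 1
    · rw [← Real.rpow_natCast α (m + 2), ← Real.rpow_mul hα.le, hcast, mul_one_div,
        div_self (by positivity : ((m:ℝ) + 2) ≠ 0), Real.rpow_one]
    · rw [Yf, hcast]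
  -- limit of q ∘ Y times bounded
  have hT2 : Tendsto (fun α => qf m (Yf m α) * ((Yf m α - 1) / α ^ 2)) l (nhds 0) := by
    apply Filter.Tendsto.zero_mul_isBoundedUnder_le ((qf_tendsto m).comp htendY)
    apply Filter.isBoundedUnder_of_eventually_le (a := K)
    filter_upwards [hYbd, hmem] with α h1 h2
    simp only [Function.comp_apply, Real.norm_eq_abs, abs_div, abs_pow, abs_of_pos h2.1]
    rw [div_le_iff₀ (pow_pos h2.1 2)]
    exact h1
  -- sin α / α limits
  have hW2 : Tendsto (fun α : ℝ => (Real.sin α / α - 1) / α ^ 2) l (nhds (-(1/6))) := by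
    refine Tendsto.congr' ?_ tendsto_aux_sin'
    filter_upwards [hmem] with α hα
    have hne : α ≠ 0 := hα.1.ne'
    rw [div_eq_div_iff (pow_ne_zero 3 hne) (pow_ne_zero 2 hne)]
    field_simp
  have hW : Tendsto (fun α : ℝ => Real.sin α / α) l (nhds 1) := by
    have h2 : Tendsto (fun α : ℝ => α ^ 2) l (nhds 0) := by
      have := (continuous_pow 2).tendsto (0:ℝ)
      simp only [ne_eq, OfNat.ofNat_ne_zero, not_false_eq_true, zero_pow] at this
      exact this.mono_left nhdsWithin_le_nhds
    have h3 := (hW2.mul h2).add_const 1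
    refine Tendsto.congr' ?_ (by simpa using h3)
    filter_upwards [hmem] with α hα
    have hne : α ≠ 0 := hα.1.ne'
    field_simp
    ring
  have hX : Tendsto (fun α : ℝ => (1 - Real.sin α ^ (m + 1) / α ^ (m + 1)) / α ^ 2) l
      (nhds (((m : ℝ) + 1) / 6)) := by
    have hsum : Tendsto (fun α : ℝ => ∑ i ∈ Finset.range (m + 1), (Real.sin α / α) ^ i) l
        (nhds ((m : ℝ) + 1)) := by
      have := tendsto_finset_sum (Finset.range (m + 1)) (fun i _ => hW.pow i)
      simpa using this
    have hneg : Tendsto (fun α : ℝ => (1 - Real.sin α / α) / α ^ 2) l (nhds (1/6)) := by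
      have h' : Tendsto (fun α : ℝ => -((Real.sin α / α - 1) / α ^ 2)) l (nhds (1/6)) := by
        simpa using hW2.neg
      exact h'.congr (fun α => by ring)
    have hprod := hsum.mul hneg
    have hval : ((m : ℝ) + 1) * (1/6) = ((m : ℝ) + 1) / 6 := by ring
    rw [hval] at hprod
    refine Tendsto.congr' ?_ hprod
    filter_upwards [hmem] with α hα
    have hαne : α ≠ 0 := hα.1.ne'
    have hgs := geom_sum_mul (Real.sin α / α) (m + 1)
    have h1 : (∑ i ∈ Finset.range (m + 1), (Real.sin α / α) ^ i) * (1 - Real.sin α / α)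
        = 1 - (Real.sin α / α) ^ (m + 1) := by
      calc (∑ i ∈ Finset.range (m + 1), (Real.sin α / α) ^ i) * (1 - Real.sin α / α)
          = -((∑ i ∈ Finset.range (m + 1), (Real.sin α / α) ^ i) * (Real.sin α / α - 1)) := by
            ring
        _ = -((Real.sin α / α) ^ (m + 1) - 1) := by rw [hgs]
        _ = 1 - (Real.sin α / α) ^ (m + 1) := by ring
    rw [← div_pow, ← h1]
    ring
  -- tan limit
  have hZ : Tendsto (fun α : ℝ => (1 - α / Real.tan α) / α ^ 2) l (nhds (1/3)) := by
    have hWinv : Tendsto (fun α : ℝ => α / Real.sin α) l (nhds 1) := by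
      have h' : Tendsto (fun α : ℝ => (Real.sin α / α)⁻¹) l (nhds 1) := by
        simpa using hW.inv₀ one_ne_zero
      exact h'.congr (fun α => by rw [inv_div])
    have hprod := tendsto_aux_sincos'.mul hWinv
    rw [mul_one] at hprod
    refine Tendsto.congr' ?_ hprod
    filter_upwards [hmem] with α hα
    have hα0 : 0 < α := hα.1
    have hsin : 0 < Real.sin α :=
      Real.sin_pos_of_pos_of_lt_pi hα0 (by linarith [Real.pi_gt_three, hα.2])
    have hcos : 0 < Real.cos α := by
      apply Real.cos_pos_of_mem_Ioo
      constructor <;> [linarith [Real.pi_gt_three]; linarith [Real.pi_gt_three, hα.2]]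
    rw [Real.tan_eq_sin_div_cos]
    field_simp
  -- Y^(m+1) inverse limit
  have hYpow : Tendsto (fun α => ((Yf m α) ^ (m + 1))⁻¹) l (nhds 1) := by
    have := (htendY.pow (m + 1)).inv₀ (by norm_num)
    simpa using this
  -- assemble
  have hmain : Tendsto (fun α : ℝ =>
      (1 - Real.sin α ^ (m + 1) / α ^ (m + 1)) / α ^ 2 * ((Yf m α ^ (m + 1))⁻¹)
      + qf m (Yf m α) * ((Yf m α - 1) / α ^ 2)
      + ((m : ℝ) + 1) * Yf m α * ((1 - α / Real.tan α) / α ^ 2)) l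
      (nhds (((m : ℝ) + 1) / 6 * 1 + 0 + ((m : ℝ) + 1) * 1 * (1/3))) :=
    ((hX.mul hYpow).add hT2).add ((tendsto_const_nhds.mul htendY).mul hZ)
  have hval : (((m : ℝ) + 1) / 6 * 1 + 0 + ((m : ℝ) + 1) * 1 * (1/3))
      = (((m + 2 : ℕ) : ℝ) - 1) / 2 := by push_cast; ring
  rw [hval] at hmain
  refine Tendsto.congr' ?_ hmain
  filter_upwards [hmem, hAhalf, hSn, hYpos, hYbd] with α h1 h2 hSnα hYp hYb
  have hα0 : (0:ℝ) < α := h1.1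
  have hαne : α ≠ 0 := hα0.ne'
  have hsin : 0 < Real.sin α :=
    Real.sin_pos_of_pos_of_lt_pi hα0 (by linarith [Real.pi_gt_three, h1.2])
  have hcos : 0 < Real.cos α := by
    apply Real.cos_pos_of_mem_Ioo
    constructor <;> [linarith [Real.pi_gt_three]; linarith [Real.pi_gt_three, h1.2]]
  have hYne : Yf m α ≠ 0 := hYp.ne'
  show _ = cn (m + 2) α / α ^ 2
  rw [cn, hSnα, show m + 2 - 1 = m + 1 from rfl, Real.tan_eq_sin_div_cos]
  have hcast : ((m + 2 : ℕ) : ℝ) = (m : ℝ) + 2 := by push_cast; ring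
  rw [hcast]
  rcases eq_or_ne (Yf m α) 1 with hY1 | hY1
  · rw [hY1]
    simp only [qf, if_pos rfl]
    field_simp
    ring
  · have hq' : qf m (Yf m α)
        = (((m : ℝ) + 2) - ((Yf m α) ^ (m + 1))⁻¹ - ((m : ℝ) + 1) * Yf m α) / (Yf m α - 1) := by
      simp [qf, hY1]
    rw [hq']
    have hYm1 : Yf m α - 1 ≠ 0 := sub_ne_zero.2 hY1
    field_simp
    ring
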